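/- Let γ = (1+√5)/2 and let ξ be an extremal real number: there exist C ≥ 1, an increasing unbounded sequence of positive integers (X_k) and non-zero points x_k ∈ ℤ³ with C⁻¹X_k^γ ≤ X_{k+1} ≤ C·X_k^γ, ‖x_k‖ ≤ C·X_k, and max(|x_{k,1}-x_{k,0}ξ|, |x_{k,2}-x_{k,0}ξ²|) ≤ C·X_k^{-1}. If additionally 1 ≤ |det(x_k)| ≤ C and 1 ≤ |det(x_k, x_{k+1}, x_{k+2})| ≤ C for all k, then ξ is neither rational nor quadratic over ℚ. -/
import Mathlib

theorem stmt_19 (ξ : ℝ) (C : ℝ) (hC : 1 ≤ C)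
    (X : ℕ → ℤ) (hXpos : ∀ k, 0 < X k) (hXmono : StrictMono X)
    (hXunb : ∀ B : ℤ, ∃ k, B < X k)
    (x : ℕ → Fin 3 → ℤ) (hx : ∀ k, x k ≠ 0)
    (hgrow : ∀ k, C⁻¹ * (X k : ℝ) ^ ((1 + Real.sqrt 5) / 2) ≤ (X (k + 1) : ℝ) ∧
      (X (k + 1) : ℝ) ≤ C * (X k : ℝ) ^ ((1 + Real.sqrt 5) / 2))
    (hnorm : ∀ k i, |(x k i : ℝ)| ≤ C * (X k : ℝ))
    (hL : ∀ k, max |(x k 1 : ℝ) - (x k 0 : ℝ) * ξ| |(x k 2 : ℝ) - (x k 0 : ℝ) * ξ ^ 2| ≤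
      C * (X k : ℝ)⁻¹)
    (hdet2 : ∀ k, 1 ≤ |x k 0 * x k 2 - (x k 1) ^ 2| ∧
      (|x k 0 * x k 2 - (x k 1) ^ 2| : ℝ) ≤ C)
    (hdet3 : ∀ k, 1 ≤ |(Matrix.of (fun i j : Fin 3 => x (k + (i : ℕ)) j)).det| ∧
      (|(Matrix.of (fun i j : Fin 3 => x (k + (i : ℕ)) j)).det| : ℝ) ≤ C) :
    ∀ r s t : ℤ, (r : ℝ) + s * ξ + t * ξ ^ 2 = 0 → r = 0 ∧ s = 0 ∧ t = 0 := by
  intro r s t h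
  by_contra hcon
  have hvne : ¬ (r = 0 ∧ s = 0 ∧ t = 0) := hcon
  obtain ⟨k₀, hk₀⟩ := hXunb ⌈(|(s:ℝ)| + |(t:ℝ)|) * C⌉
  have hzero : ∀ k, k₀ ≤ k → r * x k 0 + s * x k 1 + t * x k 2 = 0 := by
    intro k hk
    have hXk : (|(s:ℝ)| + |(t:ℝ)|) * C < (X k : ℝ) := by
      have h1 : (⌈(|(s:ℝ)| + |(t:ℝ)|) * C⌉ : ℝ) < (X k : ℝ) := by
        exact_mod_cast lt_of_lt_of_le hk₀ (hXmono.monotone hk)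
      exact lt_of_le_of_lt (Int.le_ceil _) h1
    have hXpos' : (0:ℝ) < (X k : ℝ) := by exact_mod_cast hXpos k
    have hA := le_trans (le_max_left _ _) (hL k)
    have hB := le_trans (le_max_right _ _) (hL k)
    have hcast : ((r * x k 0 + s * x k 1 + t * x k 2 : ℤ) : ℝ)
        = (s:ℝ) * ((x k 1 : ℝ) - (x k 0 : ℝ) * ξ)
          + (t:ℝ) * ((x k 2 : ℝ) - (x k 0 : ℝ) * ξ ^ 2)
          + (x k 0 : ℝ) * ((r : ℝ) + s * ξ + t * ξ ^ 2) := by push_cast; ring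
    rw [h, mul_zero, add_zero] at hcast
    have habs : |((r * x k 0 + s * x k 1 + t * x k 2 : ℤ) : ℝ)| < 1 := by
      rw [hcast]
      calc |(s:ℝ) * ((x k 1 : ℝ) - (x k 0 : ℝ) * ξ)
            + (t:ℝ) * ((x k 2 : ℝ) - (x k 0 : ℝ) * ξ ^ 2)|
          ≤ |(s:ℝ)| * |(x k 1 : ℝ) - (x k 0 : ℝ) * ξ|
            + |(t:ℝ)| * |(x k 2 : ℝ) - (x k 0 : ℝ) * ξ ^ 2| := by
            calc _ ≤ |(s:ℝ) * ((x k 1 : ℝ) - (x k 0 : ℝ) * ξ)|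
                + |(t:ℝ) * ((x k 2 : ℝ) - (x k 0 : ℝ) * ξ ^ 2)| := abs_add_le _ _
              _ = _ := by rw [abs_mul, abs_mul]
        _ ≤ |(s:ℝ)| * (C * (X k : ℝ)⁻¹) + |(t:ℝ)| * (C * (X k : ℝ)⁻¹) := by
            gcongr <;> positivity
        _ = ((|(s:ℝ)| + |(t:ℝ)|) * C) / (X k : ℝ) := by
            rw [div_eq_mul_inv]; ring
        _ < 1 := (div_lt_one hXpos').mpr hXk
    have : |r * x k 0 + s * x k 1 + t * x k 2| < 1 := by exact_mod_cast habs
    exact Int.abs_lt_one_iff.mp this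
  set M : Matrix (Fin 3) (Fin 3) ℤ :=
    Matrix.of (fun i j : Fin 3 => x (k₀ + (i : ℕ)) j) with hM
  have hMdet0 : M.det = 0 := by
    have hQ : (M.map (Int.cast : ℤ → ℚ)).det = 0 := by
      rw [← Matrix.exists_mulVec_eq_zero_iff]
      refine ⟨fun i => ((![r, s, t] i : ℤ) : ℚ), ?_, ?_⟩
      · intro h0
        apply hvne
        refine ⟨?_, ?_, ?_⟩
        · have := congrFun h0 0; simpa using this
        · have := congrFun h0 1; simpa using this
        · have := congrFun h0 2; simpa using this
      · funext i
        have hz := hzero (k₀ + (i : ℕ)) (Nat.le_add_right _ _)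
        have hz' : x (k₀ + (i:ℕ)) 0 * r + x (k₀ + (i:ℕ)) 1 * s
            + x (k₀ + (i:ℕ)) 2 * t = 0 := by linarith [hz]
        simp only [Matrix.mulVec, dotProduct, Fin.sum_univ_three,
          Matrix.map_apply, hM, Matrix.of_apply, Pi.zero_apply,
          Matrix.cons_val_zero, Matrix.cons_val_one, Matrix.head_cons,
          Matrix.cons_val_two, Matrix.tail_cons]
        exact_mod_cast congrArg (fun n : ℤ => (n : ℚ)) hz'
    have h2 : ((M.det : ℚ)) = (M.map (Int.cast : ℤ → ℚ)).det := by
      simpa using RingHom.map_det (Int.castRingHom ℚ) M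
    exact_mod_cast h2.trans hQ
  have h1 := (hdet3 k₀).1
  rw [← hM, hMdet0] at h1
  simp at h1
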